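/- Let $t$ and $q$ satisfy $0 < t < \pi/3$ and $q \le n/5$. Let $X = \{x_1,\dots,x_n\}$ be a multiset of $n$ points of $\mathbb{R}/\pi$ such that no arc of length $3t$ contains $n - q$ or more elements of $X$. Then there exist $x \in \mathbb{R}/\pi$ and $\rho < \pi/3$ such that both the arc $I(x,\rho)$ and the complement of the arc $I(x, \rho + t)$ each contain at least $q$ elements of $X$. -/

import Mathlib

open scoped Real
open Finset

lemma CS.coe_sub_int (u : ℝ) (k : ℤ) :
    ((u - k * π : ℝ) : AddCircle π) = (u : AddCircle π) := by
  have h : ((k * π : ℝ) : AddCircle π) = 0 := by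
    rw [AddCircle.coe_eq_zero_iff]
    exact ⟨k, by simp [zsmul_eq_mul]⟩
  rw [AddCircle.coe_sub, h, sub_zero]

lemma CS.dist_coe_le (u v : ℝ) :
    dist ((u : AddCircle π)) ((v : AddCircle π)) ≤ |u - v| := by
  rw [dist_eq_norm, ← AddCircle.coe_sub]
  simpa [Real.norm_eq_abs] using QuotientAddGroup.norm_mk_le_norm (S := AddSubgroup.zmultiples π) (m := u - v)

lemma CS.exists_rep (u v r : ℝ)
    (h : dist ((u : AddCircle π)) ((v : AddCircle π)) ≤ r) :
    ∃ w : ℝ, ((w : AddCircle π)) = (u : AddCircle π) ∧ |w - v| ≤ r := by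
  rw [dist_eq_norm, ← AddCircle.coe_sub, AddCircle.norm_eq] at h
  refine ⟨u - (round (π⁻¹ * (u - v)) : ℤ) * π, CS.coe_sub_int _ _, ?_⟩
  convert h using 2
  ring

lemma CS.nat_card_not_le {n q : ℕ} (P : Fin n → Prop)
    (h : Nat.card {i // P i} + q ≤ n) :
    q ≤ Nat.card {i : Fin n // ¬ P i} := by
  classical
  have h2 : Fintype.card {i // ¬ P i} = Fintype.card (Fin n) - Fintype.card {i // P i} :=
    Fintype.card_subtype_compl P
  have h3 : Fintype.card {i // P i} ≤ Fintype.card (Fin n) :=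
    Fintype.card_le_of_injective Subtype.val Subtype.val_injective
  rw [Nat.card_eq_fintype_card] at h ⊢
  rw [Fintype.card_fin] at h2 h3
  omega

lemma CS.nat_card_eq {n : ℕ} (P : Fin n → Prop) [DecidablePred P] :
    Nat.card {i // P i} = (Finset.univ.filter P).card := by
  rw [Nat.card_eq_fintype_card, Fintype.card_subtype]

theorem circle_separator (n q : ℕ) (t : ℝ) (ht0 : 0 < t) (ht : t < π / 3)
    (hq : (q : ℝ) ≤ n / 5) (x : Fin n → AddCircle π)
    (hno : ∀ c : AddCircle π,
      Nat.card {i : Fin n // x i ∈ Metric.closedBall c (3 * t / 2)} < n - q) :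
    ∃ (c : AddCircle π) (ρ : ℝ), 0 ≤ ρ ∧ ρ < π / 3 ∧
      q ≤ Nat.card {i : Fin n // x i ∈ Metric.closedBall c (ρ / 2)} ∧
      q ≤ Nat.card {i : Fin n // x i ∉ Metric.closedBall c ((ρ + t) / 2)} := by
  classical
  have hπ : (0 : ℝ) < π := Real.pi_pos
  rcases Nat.eq_zero_or_pos q with hq0 | hq1
  · subst hq0
    exact ⟨0, 0, le_rfl, by linarith, Nat.zero_le _, Nat.zero_le _⟩
  have h5 : 5 * q ≤ n := by
    have : (5 * q : ℝ) ≤ n := by linarith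
    exact_mod_cast this
  -- abbreviation for counts
  have hcard : ∀ (P : Fin n → Prop), Nat.card {i // P i} = (univ.filter P).card :=
    fun P => CS.nat_card_eq P
  set s : ℝ := min (2 * t) (π / 3) with hs
  have hs0 : 0 < s := lt_min (by linarith) (by linarith)
  have hts : t ≤ s := le_min (by linarith) (le_of_lt ht)
  by_cases hcase : ∃ c : AddCircle π,
      q ≤ (univ.filter (fun i => x i ∈ Metric.closedBall c (s / 4))).card
  · -- Case 1
    obtain ⟨c, hc⟩ := hcase
    refine ⟨c, s / 2, by linarith, ?_, ?_, ?_⟩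
    · have : s ≤ π / 3 := min_le_right _ _
      linarith
    · rw [hcard]
      have h24 : s / 2 / 2 = s / 4 := by ring
      rw [h24]
      exact hc
    · apply CS.nat_card_not_le
      rw [hcard]
      have hsub : univ.filter (fun i => x i ∈ Metric.closedBall c ((s / 2 + t) / 2))
          ⊆ univ.filter (fun i => x i ∈ Metric.closedBall c (3 * t / 2)) := by
        intro i hi
        rw [Finset.mem_filter] at hi ⊢
        refine ⟨hi.1, Metric.closedBall_subset_closedBall ?_ hi.2⟩
        have := min_le_left (2*t) (π/3)
        rw [hs]
        linarith
      have h1 : (univ.filter (fun i => x i ∈ Metric.closedBall c (3 * t / 2))).card < n - q := by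
        rw [← hcard]; exact hno c
      have h2 := Finset.card_le_card hsub
      omega
  · push_neg at hcase
    haveI : Fact (0 < π) := ⟨hπ⟩
    have hrep : ∀ i, ∃ u, u ∈ Set.Ico (0:ℝ) π ∧ (u : AddCircle π) = x i := fun i => by
      simpa using AddCircle.eq_coe_Ico (x i)
    choose f hf0 hf using hrep
    obtain ⟨lo, hlo0, hloπ, hSq⟩ :
        ∃ lo : ℝ, 0 ≤ lo ∧ lo + π/3 ≤ π ∧
          q ≤ (univ.filter (fun i => lo ≤ f i ∧ f i < lo + π/3)).card := by
      by_contra hcon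
      push_neg at hcon
      have hc0 := hcon 0 le_rfl (by linarith)
      have hc1 := hcon (π/3) (by linarith) (by linarith)
      have hc2 := hcon (2*(π/3)) (by linarith) (by linarith)
      have hcover : (univ : Finset (Fin n)) ⊆
          (univ.filter (fun i => (0:ℝ) ≤ f i ∧ f i < 0 + π/3)
            ∪ univ.filter (fun i => π/3 ≤ f i ∧ f i < π/3 + π/3))
            ∪ univ.filter (fun i => 2*(π/3) ≤ f i ∧ f i < 2*(π/3) + π/3) := by
        intro i _
        have h0 := (hf0 i).1
        have h1 := (hf0 i).2
        simp only [Finset.mem_union, Finset.mem_filter, Finset.mem_univ, true_and]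
        by_cases hb1 : f i < π/3
        · exact Or.inl (Or.inl ⟨h0, by linarith⟩)
        · by_cases hb2 : f i < 2*(π/3)
          · exact Or.inl (Or.inr ⟨by linarith, by linarith⟩)
          · exact Or.inr ⟨by linarith, by linarith⟩
      have hn := Finset.card_le_card hcover
      have hu := Finset.card_union_le
        (univ.filter (fun i => (0:ℝ) ≤ f i ∧ f i < 0 + π/3)
          ∪ univ.filter (fun i : Fin n => π/3 ≤ f i ∧ f i < π/3 + π/3))
        (univ.filter (fun i : Fin n => 2*(π/3) ≤ f i ∧ f i < 2*(π/3) + π/3))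
      have hu2 := Finset.card_union_le
        (univ.filter (fun i : Fin n => (0:ℝ) ≤ f i ∧ f i < 0 + π/3))
        (univ.filter (fun i : Fin n => π/3 ≤ f i ∧ f i < π/3 + π/3))
      have hcu : (univ : Finset (Fin n)).card = n := Finset.card_fin n
      omega
    set S := univ.filter (fun i => lo ≤ f i ∧ f i < lo + π/3) with hSdef
    have hSne : S.Nonempty := Finset.card_pos.1 (by omega)
    set a := S.inf' hSne f with ha
    have haS : ∀ i ∈ S, a ≤ f i := fun i hi => Finset.inf'_le f hi
    obtain ⟨i0, hi0S, hi0⟩ := Finset.exists_mem_eq_inf' hSne f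
    rw [← ha] at hi0
    have hi0P : lo ≤ f i0 ∧ f i0 < lo + π/3 := (Finset.mem_filter.1 hi0S).2
    have halo1 : lo ≤ a := hi0 ▸ hi0P.1
    have halo2 : a < lo + π/3 := hi0 ▸ hi0P.2
    set E := (S.image f).filter (fun v => q ≤ (S.filter (fun i => f i ≤ v)).card) with hE
    have hEne : E.Nonempty := by
      refine ⟨S.sup' hSne f, Finset.mem_filter.2 ⟨?_, ?_⟩⟩
      · obtain ⟨j, hjS, hj⟩ := Finset.exists_mem_eq_sup' hSne f
        exact hj ▸ Finset.mem_image_of_mem f hjS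
      · have hfT : S.filter (fun i => f i ≤ S.sup' hSne f) = S :=
          Finset.filter_true_of_mem (fun i hi => Finset.le_sup' f hi)
        rw [hfT]; exact hSq
    set e := E.min' hEne with he
    have heE : e ∈ E := E.min'_mem hEne
    rw [hE, Finset.mem_filter] at heE
    obtain ⟨heim, heq⟩ := heE
    obtain ⟨i1, hi1S, hi1⟩ := Finset.mem_image.1 heim
    have hi1P : lo ≤ f i1 ∧ f i1 < lo + π/3 := (Finset.mem_filter.1 hi1S).2
    have helo1 : lo ≤ e := hi1 ▸ hi1P.1
    have helo2 : e < lo + π/3 := hi1 ▸ hi1P.2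
    have hae : a ≤ e := hi1 ▸ haS i1 hi1S
    have hlt : (S.filter (fun i => f i < e)).card < q := by
      by_contra hge
      push_neg at hge
      have hBne : (S.filter (fun i => f i < e)).Nonempty := Finset.card_pos.1 (by omega)
      have hv'lt : (S.filter (fun i => f i < e)).sup' hBne f < e := by
        rw [Finset.sup'_lt_iff]
        exact fun i hi => (Finset.mem_filter.1 hi).2
      have hv'E : (S.filter (fun i => f i < e)).sup' hBne f ∈ E := by
        rw [hE, Finset.mem_filter]
        constructor
        · obtain ⟨j, hjB, hj⟩ := Finset.exists_mem_eq_sup' hBne f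
          exact hj ▸ Finset.mem_image_of_mem f (Finset.mem_of_mem_filter j hjB)
        · refine le_trans hge (Finset.card_le_card ?_)
          intro i hi
          have hiS := Finset.mem_of_mem_filter i hi
          exact Finset.mem_filter.2 ⟨hiS, Finset.le_sup' f hi⟩
      have hle := E.min'_le _ hv'E
      rw [← he] at hle
      linarith
    refine ⟨(((a + e)/2 : ℝ) : AddCircle π), e - a, by linarith, by linarith, ?_, ?_⟩
    · rw [hcard]
      refine le_trans heq (Finset.card_le_card ?_)
      intro i hi
      rw [Finset.mem_filter] at hi
      have hai := haS i hi.1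
      rw [Finset.mem_filter, Metric.mem_closedBall]
      refine ⟨Finset.mem_univ i, ?_⟩
      calc dist (x i) (((a + e)/2 : ℝ) : AddCircle π)
          = dist ((f i : ℝ) : AddCircle π) (((a + e)/2 : ℝ) : AddCircle π) := by rw [hf i]
        _ ≤ |f i - (a + e)/2| := CS.dist_coe_le _ _
        _ ≤ (e - a)/2 := abs_le.2 ⟨by linarith [hi.2], by linarith [hi.2]⟩
    · apply CS.nat_card_not_le
      rw [hcard]
      have hsub : univ.filter
            (fun i => x i ∈ Metric.closedBall (((a + e)/2 : ℝ) : AddCircle π) ((e - a + t)/2))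
          ⊆ (univ.filter (fun i => x i ∈ Metric.closedBall (((a - t/4 : ℝ)) : AddCircle π) (s/4))
            ∪ univ.filter (fun i => x i ∈ Metric.closedBall (((e + t/4 : ℝ)) : AddCircle π) (s/4)))
            ∪ S.filter (fun i => f i ≤ e) := by
        intro i hi
        rw [Finset.mem_filter, Metric.mem_closedBall] at hi
        obtain ⟨w, hw, hwd⟩ := CS.exists_rep (f i) ((a + e)/2) ((e - a + t)/2)
          (by rw [hf i]; exact hi.2)
        rw [abs_le] at hwd
        have hw1 : a - t/2 ≤ w := by linarith [hwd.1]
        have hw2 : w ≤ e + t/2 := by linarith [hwd.2]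
        simp only [Finset.mem_union]
        rcases lt_or_ge w a with hcw | hcw
        · refine Or.inl (Or.inl ?_)
          rw [Finset.mem_filter, Metric.mem_closedBall]
          refine ⟨Finset.mem_univ i, ?_⟩
          calc dist (x i) (((a - t/4 : ℝ)) : AddCircle π)
              = dist ((w : ℝ) : AddCircle π) (((a - t/4 : ℝ)) : AddCircle π) := by
                rw [← hf i, hw]
            _ ≤ |w - (a - t/4)| := CS.dist_coe_le _ _
            _ ≤ t/4 := abs_le.2 ⟨by linarith, by linarith⟩
            _ ≤ s/4 := by linarith
        · rcases le_or_gt w e with hce | hce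
          · refine Or.inr ?_
            have hwf : w = f i := by
              have hmem1 : w ∈ Set.Ico (0:ℝ) (0 + π) := ⟨by linarith, by linarith⟩
              have hmem2 : f i ∈ Set.Ico (0:ℝ) (0 + π) := by
                simpa using hf0 i
              exact (AddCircle.coe_eq_coe_iff_of_mem_Ico hmem1 hmem2).1 (by rw [hw, hf i])
            rw [Finset.mem_filter, hSdef, Finset.mem_filter]
            exact ⟨⟨Finset.mem_univ i, by rw [← hwf]; constructor <;> linarith⟩, by
              rw [← hwf]; exact hce⟩
          · refine Or.inl (Or.inr ?_)
            rw [Finset.mem_filter, Metric.mem_closedBall]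
            refine ⟨Finset.mem_univ i, ?_⟩
            calc dist (x i) (((e + t/4 : ℝ)) : AddCircle π)
                = dist ((w : ℝ) : AddCircle π) (((e + t/4 : ℝ)) : AddCircle π) := by
                  rw [← hf i, hw]
              _ ≤ |w - (e + t/4)| := CS.dist_coe_le _ _
              _ ≤ t/4 := abs_le.2 ⟨by linarith, by linarith⟩
              _ ≤ s/4 := by linarith
      have h1 := Finset.card_le_card hsub
      have h2 := Finset.card_union_le
        (univ.filter (fun i => x i ∈ Metric.closedBall (((a - t/4 : ℝ)) : AddCircle π) (s/4))
          ∪ univ.filter (fun i => x i ∈ Metric.closedBall (((e + t/4 : ℝ)) : AddCircle π) (s/4)))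
        (S.filter (fun i => f i ≤ e))
      have h3 := Finset.card_union_le
        (univ.filter (fun i => x i ∈ Metric.closedBall (((a - t/4 : ℝ)) : AddCircle π) (s/4)))
        (univ.filter (fun i => x i ∈ Metric.closedBall (((e + t/4 : ℝ)) : AddCircle π) (s/4)))
      have hL := hcase (((a - t/4 : ℝ)) : AddCircle π)
      have hR := hcase (((e + t/4 : ℝ)) : AddCircle π)
      have hMsub : S.filter (fun i => f i ≤ e) ⊆ S.filter (fun i => f i < e)
          ∪ univ.filter (fun i => x i ∈ Metric.closedBall ((e : ℝ) : AddCircle π) (s/4)) := by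
        intro i hi
        rw [Finset.mem_filter] at hi
        rcases lt_or_eq_of_le hi.2 with hcc | hcc
        · exact Finset.mem_union_left _ (Finset.mem_filter.2 ⟨hi.1, hcc⟩)
        · refine Finset.mem_union_right _ (Finset.mem_filter.2 ⟨Finset.mem_univ i, ?_⟩)
          rw [Metric.mem_closedBall, ← hf i, hcc, dist_self]
          linarith
      have hM := le_trans (Finset.card_le_card hMsub) (Finset.card_union_le
        (S.filter (fun i => f i < e))
        (univ.filter (fun i => x i ∈ Metric.closedBall ((e : ℝ) : AddCircle π) (s/4))))
      have hE2 := hcase ((e : ℝ) : AddCircle π)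
      omega
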